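/- Sklar's theorem (existence, continuous case): if X = (X₁,…,X_d) is a random vector whose marginal CDFs F₁,…,F_d are all continuous, then the joint CDF of (F₁(X₁),…,F_d(X_d)) is a copula C, and the joint CDF H of X satisfies H(x₁,…,x_d) = C(F₁(x₁),…,F_d(x_d)) for all x. -/

import Mathlib

open MeasureTheory ProbabilityTheory Set Filter

/-- A `d`-dimensional copula: on `[0,1]^d` it is the joint CDF of a random
vector with uniform `[0,1]` margins. -/
def IsCopula (d : ℕ) (C : (Fin d → ℝ) → ℝ) : Prop :=
  ∃ μ : Measure (Fin d → ℝ), IsProbabilityMeasure μ ∧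
    (∀ i, μ.map (fun y => y i) = volume.restrict (Icc (0 : ℝ) 1)) ∧
    ∀ u : Fin d → ℝ, (∀ i, u i ∈ Icc (0 : ℝ) 1) →
      C u = (μ {y | ∀ i, y i ≤ u i}).toReal

open Topology

section Aux

variable {Ω : Type*} [MeasureSpace Ω] [IsProbabilityMeasure (ℙ : Measure Ω)]

lemma G_eq_cdf (Z : Ω → ℝ) (hZ : Measurable Z) (G : ℝ → ℝ)
    (hG : ∀ x, G x = (ℙ {ω | Z ω ≤ x}).toReal) :
    G = cdf (Measure.map Z ℙ) := by
  haveI : IsProbabilityMeasure (Measure.map Z ℙ) :=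
    Measure.isProbabilityMeasure_map hZ.aemeasurable
  funext x
  rw [hG, cdf_eq_real, measureReal_def, Measure.map_apply hZ measurableSet_Iic]
  rfl

lemma G_mono (Z : Ω → ℝ) (hZ : Measurable Z) (G : ℝ → ℝ)
    (hG : ∀ x, G x = (ℙ {ω | Z ω ≤ x}).toReal) : Monotone G := by
  haveI : IsProbabilityMeasure (Measure.map Z ℙ) :=
    Measure.isProbabilityMeasure_map hZ.aemeasurable
  rw [G_eq_cdf Z hZ G hG]; exact monotone_cdf _

lemma G_le_one (Z : Ω → ℝ) (hZ : Measurable Z) (G : ℝ → ℝ)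
    (hG : ∀ x, G x = (ℙ {ω | Z ω ≤ x}).toReal) (x : ℝ) : G x ≤ 1 := by
  haveI : IsProbabilityMeasure (Measure.map Z ℙ) :=
    Measure.isProbabilityMeasure_map hZ.aemeasurable
  rw [G_eq_cdf Z hZ G hG]; exact cdf_le_one _ _

lemma G_atTop (Z : Ω → ℝ) (hZ : Measurable Z) (G : ℝ → ℝ)
    (hG : ∀ x, G x = (ℙ {ω | Z ω ≤ x}).toReal) : Tendsto G atTop (𝓝 1) := by
  haveI : IsProbabilityMeasure (Measure.map Z ℙ) :=
    Measure.isProbabilityMeasure_map hZ.aemeasurable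
  rw [G_eq_cdf Z hZ G hG]; exact tendsto_cdf_atTop _

lemma G_atBot (Z : Ω → ℝ) (hZ : Measurable Z) (G : ℝ → ℝ)
    (hG : ∀ x, G x = (ℙ {ω | Z ω ≤ x}).toReal) : Tendsto G atBot (𝓝 0) := by
  haveI : IsProbabilityMeasure (Measure.map Z ℙ) :=
    Measure.isProbabilityMeasure_map hZ.aemeasurable
  rw [G_eq_cdf Z hZ G hG]; exact tendsto_cdf_atBot _

lemma meas_eq_ofReal (Z : Ω → ℝ) (G : ℝ → ℝ)
    (hG : ∀ x, G x = (ℙ {ω | Z ω ≤ x}).toReal) (x : ℝ) :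
    ℙ {ω | Z ω ≤ x} = ENNReal.ofReal (G x) := by
  rw [hG, ENNReal.ofReal_toReal (measure_ne_top _ _)]

lemma G_bddAbove (Z : Ω → ℝ) (hZ : Measurable Z) (G : ℝ → ℝ)
    (hG : ∀ x, G x = (ℙ {ω | Z ω ≤ x}).toReal) (t : ℝ) (ht : t < 1) :
    BddAbove {s : ℝ | G s ≤ t} := by
  obtain ⟨y, hy⟩ := ((G_atTop Z hZ G hG).eventually (eventually_gt_nhds ht)).exists
  exact ⟨y, fun s hs => le_of_not_gt fun hlt =>
    absurd ((G_mono Z hZ G hG) hlt.le) (not_le.2 (lt_of_le_of_lt hs hy))⟩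

lemma sklar_core (Z : Ω → ℝ) (hZ : Measurable Z) (G : ℝ → ℝ)
    (hG : ∀ x, G x = (ℙ {ω | Z ω ≤ x}).toReal) (hGc : Continuous G)
    (t : ℝ) (ht : t < 1) (hne : {s : ℝ | G s ≤ t}.Nonempty) :
    ℙ {ω | G (Z ω) ≤ t} = ENNReal.ofReal (G (sSup {s | G s ≤ t})) ∧
      G (sSup {s | G s ≤ t}) ≤ t := by
  have hmono := G_mono Z hZ G hG
  have hSc : IsClosed {s : ℝ | G s ≤ t} := isClosed_Iic.preimage hGc
  have hbdd := G_bddAbove Z hZ G hG t ht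
  have hmem : sSup {s : ℝ | G s ≤ t} ∈ {s : ℝ | G s ≤ t} := hSc.csSup_mem hne hbdd
  refine ⟨?_, hmem⟩
  have hset : {ω | G (Z ω) ≤ t} = {ω | Z ω ≤ sSup {s : ℝ | G s ≤ t}} := by
    ext ω
    exact ⟨fun h => le_csSup hbdd h, fun h => le_trans (hmono h) hmem⟩
  rw [hset, meas_eq_ofReal Z G hG]

/-- For any `x`, `ℙ {G ∘ Z ≤ G x} = ℙ {Z ≤ x}`. -/
lemma sklar_level (Z : Ω → ℝ) (hZ : Measurable Z) (G : ℝ → ℝ)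
    (hG : ∀ x, G x = (ℙ {ω | Z ω ≤ x}).toReal) (hGc : Continuous G) (x : ℝ) :
    ℙ {ω | G (Z ω) ≤ G x} = ℙ {ω | Z ω ≤ x} := by
  rcases lt_or_ge (G x) 1 with h1 | h1
  · obtain ⟨hm, hle⟩ := sklar_core Z hZ G hG hGc (G x) h1 ⟨x, by simp⟩
    have hxle : x ≤ sSup {s | G s ≤ G x} :=
      le_csSup (G_bddAbove Z hZ G hG _ h1) (by simp : x ∈ {s | G s ≤ G x})
    have heq : G (sSup {s | G s ≤ G x}) = G x :=
      le_antisymm hle ((G_mono Z hZ G hG) hxle)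
    rw [hm, heq, meas_eq_ofReal Z G hG]
  · have hx1 : G x = 1 := le_antisymm (G_le_one Z hZ G hG x) h1
    have huniv : {ω | G (Z ω) ≤ G x} = univ := by
      ext ω; simpa [hx1] using G_le_one Z hZ G hG (Z ω)
    rw [huniv, measure_univ, meas_eq_ofReal Z G hG, hx1]
    simp

/-- For `t < 1`, `ℙ {G ∘ Z ≤ t} = ENNReal.ofReal t`. -/
lemma sklar_unif (Z : Ω → ℝ) (hZ : Measurable Z) (G : ℝ → ℝ)
    (hG : ∀ x, G x = (ℙ {ω | Z ω ≤ x}).toReal) (hGc : Continuous G)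
    (t : ℝ) (ht : t < 1) :
    ℙ {ω | G (Z ω) ≤ t} = ENNReal.ofReal t := by
  by_cases hne : {s : ℝ | G s ≤ t}.Nonempty
  · obtain ⟨hm, hle⟩ := sklar_core Z hZ G hG hGc t ht hne
    have hge : t ≤ G (sSup {s | G s ≤ t}) := by
      by_contra hlt
      push_neg at hlt
      have h1 : ∀ᶠ y in 𝓝 (sSup {s | G s ≤ t}), G y < t :=
        (hGc.continuousAt).eventually_lt continuous_const.continuousAt hlt
      have h2 : ∀ᶠ y in 𝓝[>] (sSup {s | G s ≤ t}), G y < t :=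
        h1.filter_mono nhdsWithin_le_nhds
      obtain ⟨y, hy, hy'⟩ := (h2.and self_mem_nhdsWithin).exists
      exact absurd (le_csSup (G_bddAbove Z hZ G hG t ht) hy.le) (not_le.2 hy')
    rw [hm, le_antisymm hle hge]
  · have hempty : {ω | G (Z ω) ≤ t} = ∅ := by
      ext ω; simp only [mem_setOf_eq, mem_empty_iff_false, iff_false]
      exact fun h => hne ⟨Z ω, h⟩
    have ht0 : t ≤ 0 := by
      by_contra h
      push_neg at h
      obtain ⟨y, hy⟩ := ((G_atBot Z hZ G hG).eventually (eventually_lt_nhds h)).exists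
      exact hne ⟨y, hy.le⟩
    rw [hempty, measure_empty, Eq.comm, ENNReal.ofReal_eq_zero.2 ht0]

end Aux

/-- Sklar's theorem (existence, continuous case): if all marginal CDFs of a
random vector `X` are continuous, then the joint CDF of `(F₁(X₁),…,F_d(X_d))`
is a copula `C`, and the joint CDF of `X` is `C ∘ (F₁,…,F_d)`. -/
theorem sklar_existence_continuous
    {Ω : Type*} [MeasureSpace Ω] [IsProbabilityMeasure (ℙ : Measure Ω)]
    (d : ℕ) (X : Ω → Fin d → ℝ) (hX : Measurable X)
    (F : Fin d → ℝ → ℝ)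
    (hF : ∀ i x, F i x = (ℙ {ω | X ω i ≤ x}).toReal)
    (hFc : ∀ i, Continuous (F i))
    (C : (Fin d → ℝ) → ℝ)
    (hC : ∀ u, C u = (ℙ {ω | ∀ i, F i (X ω i) ≤ u i}).toReal) :
    IsCopula d C ∧
      ∀ x : Fin d → ℝ, (ℙ {ω | ∀ i, X ω i ≤ x i}).toReal = C fun i => F i (x i) := by
  have hXi : ∀ i, Measurable fun ω => X ω i := fun i => (measurable_pi_apply i).comp hX
  have hY : Measurable fun ω => fun i => F i (X ω i) :=
    measurable_pi_lambda _ fun i => (hFc i).measurable.comp (hXi i)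
  set μ := Measure.map (fun ω i => F i (X ω i)) ℙ with hμ
  haveI hμp : IsProbabilityMeasure μ := Measure.isProbabilityMeasure_map hY.aemeasurable
  have hFi : ∀ i, ∀ y : ℝ, F i y = (ℙ {ω | X ω i ≤ y}).toReal := fun i y => hF i y
  -- the key identification of events
  have key : ∀ x : Fin d → ℝ,
      ℙ {ω | ∀ i, F i (X ω i) ≤ F i (x i)} = ℙ {ω | ∀ i, X ω i ≤ x i} := by
    intro x
    have hsub : {ω | ∀ i, X ω i ≤ x i} ⊆ {ω | ∀ i, F i (X ω i) ≤ F i (x i)} :=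
      fun ω h i => (G_mono (fun ω => X ω i) (hXi i) (F i) (hFi i)) (h i)
    refine le_antisymm ?_ (measure_mono hsub)
    have hN : ∀ i, ℙ ({ω | F i (X ω i) ≤ F i (x i)} \ {ω | X ω i ≤ x i}) = 0 := by
      intro i
      have h1 := sklar_level (fun ω => X ω i) (hXi i) (F i) (hFi i) (hFc i) (x i)
      have hsub1 : {ω | X ω i ≤ x i} ⊆ {ω | F i (X ω i) ≤ F i (x i)} :=
        fun ω h => (G_mono (fun ω => X ω i) (hXi i) (F i) (hFi i)) h
      rw [measure_diff hsub1 (measurableSet_le (hXi i) measurable_const).nullMeasurableSet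
        (measure_ne_top _ _), h1, tsub_self]
    calc ℙ {ω | ∀ i, F i (X ω i) ≤ F i (x i)}
        ≤ ℙ ({ω | ∀ i, X ω i ≤ x i} ∪
            ⋃ i, ({ω | F i (X ω i) ≤ F i (x i)} \ {ω | X ω i ≤ x i})) := by
          apply measure_mono
          intro ω hω
          by_cases hB : ∀ i, X ω i ≤ x i
          · exact Or.inl hB
          · push_neg at hB
            obtain ⟨i, hi⟩ := hB
            exact Or.inr (mem_iUnion.2 ⟨i, ⟨hω i, not_le.2 hi⟩⟩)
      _ ≤ ℙ {ω | ∀ i, X ω i ≤ x i} +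
            ℙ (⋃ i, ({ω | F i (X ω i) ≤ F i (x i)} \ {ω | X ω i ≤ x i})) :=
          measure_union_le _ _
      _ = ℙ {ω | ∀ i, X ω i ≤ x i} := by
          rw [measure_iUnion_null fun i => hN i, add_zero]
  constructor
  · refine ⟨μ, hμp, ?_, ?_⟩
    · intro i
      haveI : IsProbabilityMeasure (volume.restrict (Icc (0 : ℝ) 1)) := by
        constructor
        simp [Real.volume_Icc]
      refine Measure.ext_of_Iic _ _ fun a => ?_
      rw [hμ, Measure.map_map (measurable_pi_apply i) hY,
        Measure.map_apply ((measurable_pi_apply i).comp hY) measurableSet_Iic,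
        Measure.restrict_apply measurableSet_Iic]
      have hinter : Iic a ∩ Icc (0 : ℝ) 1 = Icc 0 (min a 1) := by
        ext y
        simp only [mem_inter_iff, mem_Iic, mem_Icc, le_min_iff]
        constructor
        · rintro ⟨h1, h2, h3⟩; exact ⟨h2, h1, h3⟩
        · rintro ⟨h1, h2, h3⟩; exact ⟨h2, h1, h3⟩
      rw [hinter, Real.volume_Icc]
      have hpre : (fun y : Fin d → ℝ => y i) ∘ (fun ω i => F i (X ω i)) ⁻¹' Iic a
          = {ω | F i (X ω i) ≤ a} := rfl
      rcases lt_or_ge a 1 with ha | ha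
      · rw [show ((fun y : Fin d → ℝ => y i) ∘ fun ω i => F i (X ω i)) ⁻¹' Iic a
            = {ω | F i (X ω i) ≤ a} from rfl,
          sklar_unif (fun ω => X ω i) (hXi i) (F i) (hFi i) (hFc i) a ha,
          min_eq_left ha.le, sub_zero]
      · rw [show ((fun y : Fin d → ℝ => y i) ∘ fun ω i => F i (X ω i)) ⁻¹' Iic a
            = {ω | F i (X ω i) ≤ a} from rfl]
        have : {ω | F i (X ω i) ≤ a} = univ := by
          ext ω
          simpa using le_trans (G_le_one (fun ω => X ω i) (hXi i) (F i) (hFi i) (X ω i)) ha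
        rw [this, measure_univ, min_eq_right ha, sub_zero, ENNReal.ofReal_one]
    · intro u hu
      rw [hC u, hμ, Measure.map_apply hY]
      · rfl
      · have : {y : Fin d → ℝ | ∀ i, y i ≤ u i} = ⋂ i, {y | y i ≤ u i} := by
          ext y; simp
        rw [this]
        exact MeasurableSet.iInter fun i =>
          measurableSet_le (measurable_pi_apply i) measurable_const
  · intro x
    rw [hC fun i => F i (x i), key x]
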